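/- For n ≥ 1, the number of functions f : {1,...,n} → {1,...,n} such that for all i < j, f(j) − (j − i) is not in the interval [1, f(i) − 1], equals the sum over k from 0 to n−1 of C_k^(n−1−k) · C_{n−k}, where C_m^(j) = ((j+1)/(2m+j+1)) · binomial(2m+j+1, m) and C_m is the m-th Catalan number. -/

import Mathlib

def gc (n k : ℕ) : ℚ := ((k : ℚ) + 1) / (2 * (n : ℚ) + (k : ℚ) + 1) * ((2 * n + k + 1).choose n : ℚ)

def cat (n : ℕ) : ℚ := 1 / ((n : ℚ) + 1) * ((2 * n).choose n : ℚ)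

def Cond {n : ℕ} (u : Fin n → ℕ) : Prop :=
  ∀ i j : Fin n, i < j →
    ¬(1 ≤ (u j : ℤ) - (((j : ℕ) : ℤ) - ((i : ℕ) : ℤ)) ∧
      (u j : ℤ) - (((j : ℕ) : ℤ) - ((i : ℕ) : ℤ)) ≤ (u i : ℤ) - 1)


namespace Aux

/-- The pair condition, subtraction-free, 0-based indices. -/
def P' {m : ℕ} (f : Fin m → ℕ) : Prop :=
  ∀ i j : Fin m, i < j → (f j + i.val ≤ j.val ∨ f i + j.val ≤ f j + i.val)

def Fam (m : ℕ) (cap : ℕ → ℕ) : Type :=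
  {f : Fin m → ℕ // (∀ i : Fin m, 1 ≤ f i ∧ f i ≤ cap i.val) ∧ P' f}

def PrefF (m : ℕ) (cap : ℕ → ℕ) : Type :=
  {f : Fin m → ℕ // (∀ i : Fin m, 1 ≤ f i ∧ f i ≤ cap i.val) ∧ P' f ∧
      ∀ h : 0 < m, m ≤ f ⟨m - 1, by omega⟩}

instance famFinite (m : ℕ) (cap : ℕ → ℕ) : Finite (Fam m cap) := by
  classical
  set M := (Finset.range m).sup cap with hM
  have : ∀ F : Fam m cap, ∀ i : Fin m, F.1 i < M + 1 := by
    intro F i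
    have h1 := (F.2.1 i).2
    have h2 : cap i.val ≤ M := Finset.le_sup (by simp [i.isLt])
    omega
  exact Finite.of_injective (fun F : Fam m cap => fun i : Fin m => (⟨F.1 i, this F i⟩ : Fin (M+1)))
    (by intro F G h; apply Subtype.ext; funext i; exact congrArg Fin.val (congrFun h i))

instance prefFinite (m : ℕ) (cap : ℕ → ℕ) : Finite (PrefF m cap) := by
  classical
  set M := (Finset.range m).sup cap with hM
  have : ∀ F : PrefF m cap, ∀ i : Fin m, F.1 i < M + 1 := by
    intro F i
    have h1 := (F.2.1 i).2
    have h2 : cap i.val ≤ M := Finset.le_sup (by simp [i.isLt])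
    omega
  exact Finite.of_injective (fun F : PrefF m cap => fun i : Fin m => (⟨F.1 i, this F i⟩ : Fin (M+1)))
    (by intro F G h; apply Subtype.ext; funext i; exact congrArg Fin.val (congrFun h i))

/-- the counting function: valid sequences of length m with caps `c + i + 1` at 0-based `i`. -/
noncomputable def W (m c : ℕ) : ℕ := Nat.card (Fam m (fun i => c + i + 1))

lemma nat_card_sigma {ι : Type*} [Fintype ι] (β : ι → Type*) [∀ i, Finite (β i)] :
    Nat.card (Σ i, β i) = ∑ i, Nat.card (β i) := by
  letI : ∀ i, Fintype (β i) := fun i => Fintype.ofFinite _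
  simp [Nat.card_eq_fintype_card, Fintype.card_sigma]

instance fam0Unique (cap : ℕ → ℕ) : Unique (Fam 0 cap) where
  default := ⟨fun i => i.elim0, ⟨fun i => i.elim0, fun i => i.elim0⟩⟩
  uniq := by intro F; apply Subtype.ext; funext i; exact i.elim0

lemma W_zero (c : ℕ) : W 0 c = 1 := Nat.card_unique

section Peel
variable (k : ℕ) (cap : ℕ → ℕ)

def peelIdx (F : PrefF (k+1) cap) : ℕ := F.1 ⟨k, by omega⟩ - (k+1)
def peelRest (F : PrefF (k+1) cap) : Fin k → ℕ := fun i => F.1 ⟨i.val, by omega⟩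
def peelGlue (c : ℕ) (g : Fin k → ℕ) : Fin (k+1) → ℕ :=
  fun j => if h : j.val < k then g ⟨j.val, h⟩ else k + 1 + c

lemma peel_last_lb (F : PrefF (k+1) cap) : k + 1 ≤ F.1 ⟨k, by omega⟩ := F.2.2.2 (by omega)
lemma peel_last_ub (F : PrefF (k+1) cap) : F.1 ⟨k, by omega⟩ ≤ cap k := (F.2.1 ⟨k, by omega⟩).2

lemma peelIdx_lt (F : PrefF (k+1) cap) : peelIdx k cap F < cap k - k := by
  have h1 := peel_last_lb k cap F
  have h2 := peel_last_ub k cap F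
  unfold peelIdx; omega

lemma peelRest_prop (F : PrefF (k+1) cap) :
    (∀ i : Fin k, 1 ≤ peelRest k cap F i ∧ peelRest k cap F i ≤ peelIdx k cap F + i.val + 1) ∧
      P' (peelRest k cap F) := by
  obtain ⟨hb, hP, hlast⟩ := F.2
  constructor
  · rintro ⟨iv, hiv⟩
    have h1 : 1 ≤ F.1 ⟨iv, by omega⟩ := (hb ⟨iv, by omega⟩).1
    have hl := peel_last_lb k cap F
    have h2 : F.1 ⟨iv, by omega⟩ + k ≤ F.1 ⟨k, by omega⟩ + iv := by
      rcases hP ⟨iv, by omega⟩ ⟨k, by omega⟩ (Fin.mk_lt_mk.2 hiv) with h | h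
      · exfalso
        have h' : F.1 ⟨k, by omega⟩ + iv ≤ k := h
        omega
      · exact h
    have hgoal : F.1 ⟨iv, by omega⟩ ≤ (F.1 ⟨k, by omega⟩ - (k+1)) + iv + 1 := by omega
    exact ⟨h1, hgoal⟩
  · rintro ⟨iv, hiv⟩ ⟨jv, hjv⟩ hij
    have hij' : iv < jv := hij
    exact hP ⟨iv, by omega⟩ ⟨jv, by omega⟩ (Fin.mk_lt_mk.2 hij')

lemma peelGlue_prop (hslope : ∀ i : ℕ, i < k → cap k + i ≤ cap i + k)
    {c : ℕ} (hck : c < cap k - k) (g : Fin k → ℕ)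
    (hb : ∀ i : Fin k, 1 ≤ g i ∧ g i ≤ c + i.val + 1) (hP : P' g) :
    (∀ i : Fin (k+1), 1 ≤ peelGlue k c g i ∧ peelGlue k c g i ≤ cap i.val) ∧
      P' (peelGlue k c g) ∧
      ∀ h : 0 < k + 1, k + 1 ≤ peelGlue k c g ⟨k + 1 - 1, by omega⟩ := by
  refine ⟨?_, ?_, ?_⟩
  · rintro ⟨iv, hiv⟩
    by_cases h : iv < k
    · have h2 : g ⟨iv, h⟩ ≤ c + iv + 1 := (hb ⟨iv, h⟩).2
      have h3 := hslope iv h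
      have h1 : 1 ≤ g ⟨iv, h⟩ := (hb ⟨iv, h⟩).1
      simp only [peelGlue, dif_pos h]
      exact ⟨h1, by omega⟩
    · have hik : iv = k := by omega
      subst hik
      simp only [peelGlue, dif_neg h]
      exact ⟨by omega, by omega⟩
  · rintro ⟨iv, hiv⟩ ⟨jv, hjv⟩ hij
    have hijv : iv < jv := hij
    by_cases h : jv < k
    · have hik : iv < k := by omega
      simp only [peelGlue, dif_pos h, dif_pos hik]
      exact hP ⟨iv, hik⟩ ⟨jv, h⟩ (Fin.mk_lt_mk.2 hijv)
    · have hjeq : jv = k := by omega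
      have hik : iv < k := by omega
      simp only [peelGlue, dif_neg h, dif_pos hik]
      right
      have h2 : g ⟨iv, hik⟩ ≤ c + iv + 1 := (hb ⟨iv, hik⟩).2
      omega
  · intro _
    have h : ¬ (k + 1 - 1 < k) := by omega
    simp only [peelGlue, dif_neg h]
    omega

def peelEquiv (hslope : ∀ i : ℕ, i < k → cap k + i ≤ cap i + k) :
    PrefF (k+1) cap ≃ Σ c : Fin (cap k - k), Fam k (fun i => c.val + i + 1) where
  toFun F := ⟨⟨peelIdx k cap F, peelIdx_lt k cap F⟩,
    ⟨peelRest k cap F, (peelRest_prop k cap F).1, (peelRest_prop k cap F).2⟩⟩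
  invFun p := ⟨peelGlue k p.1.val p.2.1,
    peelGlue_prop k cap hslope p.1.isLt p.2.1 p.2.2.1 p.2.2.2⟩
  left_inv := by
    intro F
    apply Subtype.ext
    funext j
    obtain ⟨jv, hjv⟩ := j
    by_cases h : jv < k
    · simp only [peelGlue, dif_pos h, peelRest]
    · have hj : jv = k := by omega
      have hl := peel_last_lb k cap F
      simp only [peelGlue, dif_neg h, peelIdx]
      have he : F.1 ⟨jv, hjv⟩ = F.1 ⟨k, by omega⟩ := by
        congr 1
        simp [hj]
      rw [he]
      omega
  right_inv := by
    rintro ⟨c, g⟩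
    have h1 : ¬ (k < k) := by omega
    have hfst : peelIdx k cap ⟨peelGlue k c.val g.1,
        peelGlue_prop k cap hslope c.isLt g.1 g.2.1 g.2.2⟩ = c.val := by
      simp only [peelIdx, peelGlue, dif_neg h1]
      omega
    have key : ∀ (p q : Σ c : Fin (cap k - k), Fam k (fun i => c.val + i + 1)),
        p.1.val = q.1.val → p.2.1 = q.2.1 → p = q := by
      rintro ⟨⟨cv, hc⟩, f⟩ ⟨⟨cv', hc'⟩, f'⟩ h1 h2
      simp only at h1
      subst h1
      cases Subtype.ext h2
      rfl
    apply key
    · exact hfst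
    · funext i
      obtain ⟨iv, hiv⟩ := i
      simp only [peelRest, peelGlue, dif_pos hiv]
end Peel
def fv {m : ℕ} (F : Fin m → ℕ) (p : ℕ) : ℕ := if h : p < m then F ⟨p, h⟩ else 0

/-- last 0-based index p with f p ≥ p+1 (0 if none, but p=0 always qualifies) -/
def statJ {m : ℕ} (F : Fin m → ℕ) : ℕ := Nat.findGreatest (fun p => p + 1 ≤ fv F p) (m - 1)

lemma statJ_lt {m : ℕ} (hm : 0 < m) (F : Fin m → ℕ) : statJ F < m := by
  have : statJ F ≤ m - 1 := Nat.findGreatest_le _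
  omega

lemma statJ_spec {m : ℕ} {cap : ℕ → ℕ} (hm : 0 < m) (F : Fam m cap) :
    statJ F.1 + 1 ≤ fv F.1 (statJ F.1) := by
  have h0 : (0:ℕ) < m := hm
  have h1 : (fun p => p + 1 ≤ fv F.1 p) 0 := by
    have := (F.2.1 ⟨0, h0⟩).1
    simp only [fv, dif_pos h0]
    omega
  exact Nat.findGreatest_spec (P := fun p => p + 1 ≤ fv F.1 p) (n := m - 1) (m := 0) (by omega) h1

lemma statJ_gt {m : ℕ} (F : Fin m → ℕ) {p : ℕ} (h1 : statJ F < p) (h2 : p < m) :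
    fv F p ≤ p := by
  by_contra hc
  exact Nat.findGreatest_is_greatest h1 (by omega) (by omega)

lemma after_low {m : ℕ} {cap : ℕ → ℕ} (hm : 0 < m) (F : Fam m cap) {p : ℕ}
    (h1 : statJ F.1 < p) (h2 : p < m) :
    F.1 ⟨p, h2⟩ + statJ F.1 + 1 ≤ p + 1 := by
  have hJ := statJ_lt hm F.1
  have hlow : F.1 ⟨p, h2⟩ ≤ p := by
    have := statJ_gt F.1 h1 h2
    simpa only [fv, dif_pos h2] using this
  have hspec := statJ_spec hm F
  rw [fv, dif_pos hJ] at hspec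
  rcases F.2.2 ⟨statJ F.1, hJ⟩ ⟨p, h2⟩ (Fin.mk_lt_mk.2 h1) with h | h
  · have h' : F.1 ⟨p, h2⟩ + statJ F.1 ≤ p := h
    omega
  · have h' : F.1 ⟨statJ F.1, hJ⟩ + p ≤ F.1 ⟨p, h2⟩ + statJ F.1 := h
    omega

def decompPre {m : ℕ} {cap : ℕ → ℕ} (hm : 0 < m) (F : Fam m cap) :
    Fin (statJ F.1 + 1) → ℕ :=
  fun i => F.1 ⟨i.val, by have := i.isLt; have := statJ_lt hm F.1; omega⟩

def decompSuf {m : ℕ} {cap : ℕ → ℕ} (F : Fam m cap) :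
    Fin (m - (statJ F.1 + 1)) → ℕ :=
  fun s => F.1 ⟨statJ F.1 + 1 + s.val, by have := s.isLt; omega⟩

lemma decompPre_prop {m : ℕ} {cap : ℕ → ℕ} (hm : 0 < m) (F : Fam m cap) :
    (∀ i : Fin (statJ F.1 + 1), 1 ≤ decompPre hm F i ∧
        decompPre hm F i ≤ cap i.val) ∧ P' (decompPre hm F) ∧
      ∀ h : 0 < statJ F.1 + 1,
        statJ F.1 + 1 ≤ decompPre hm F ⟨statJ F.1 + 1 - 1, by omega⟩ := by
  have hJ := statJ_lt hm F.1
  refine ⟨?_, ?_, ?_⟩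
  · rintro ⟨iv, hiv⟩
    exact F.2.1 ⟨iv, by omega⟩
  · rintro ⟨iv, hiv⟩ ⟨jv, hjv⟩ hij
    have hij' : iv < jv := hij
    exact F.2.2 ⟨iv, by omega⟩ ⟨jv, by omega⟩ (Fin.mk_lt_mk.2 hij')
  · intro _
    have hspec := statJ_spec hm F
    rw [fv, dif_pos hJ] at hspec
    exact hspec

lemma decompSuf_prop {m : ℕ} {cap : ℕ → ℕ} (hm : 0 < m) (F : Fam m cap) :
    (∀ s : Fin (m - (statJ F.1 + 1)), 1 ≤ decompSuf F s ∧
        decompSuf F s ≤ s.val + 1) ∧ P' (decompSuf F) := by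
  constructor
  · rintro ⟨sv, hsv⟩
    have hl : 1 ≤ F.1 ⟨statJ F.1 + 1 + sv, by omega⟩ := (F.2.1 _).1
    have h2 := after_low hm F (p := statJ F.1 + 1 + sv) (by omega) (by omega)
    refine ⟨hl, ?_⟩
    show F.1 ⟨statJ F.1 + 1 + sv, by omega⟩ ≤ sv + 1
    omega
  · rintro ⟨sv, hsv⟩ ⟨tv, htv⟩ hst
    have hst' : sv < tv := hst
    rcases F.2.2 ⟨statJ F.1 + 1 + sv, by omega⟩ ⟨statJ F.1 + 1 + tv, by omega⟩
      (Fin.mk_lt_mk.2 (by omega)) with h | h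
    · left
      have h' : F.1 ⟨statJ F.1 + 1 + tv, by omega⟩ + (statJ F.1 + 1 + sv)
          ≤ statJ F.1 + 1 + tv := h
      simp only [decompSuf]
      omega
    · right
      have h' : F.1 ⟨statJ F.1 + 1 + sv, by omega⟩ + (statJ F.1 + 1 + tv)
          ≤ F.1 ⟨statJ F.1 + 1 + tv, by omega⟩ + (statJ F.1 + 1 + sv) := h
      simp only [decompSuf]
      omega

def glue {m : ℕ} (kv : ℕ) (hk : kv < m) (p : Fin (kv + 1) → ℕ)
    (s : Fin (m - (kv + 1)) → ℕ) : Fin m → ℕ :=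
  fun j => if h : j.val ≤ kv then p ⟨j.val, by omega⟩ else
    s ⟨j.val - (kv + 1), by have := j.isLt; omega⟩

lemma glue_prop {m : ℕ} {cap : ℕ → ℕ} (hdom : ∀ i, i < m → i + 1 ≤ cap i)
    (kv : ℕ) (hk : kv < m)
    (p : Fin (kv + 1) → ℕ) (hpb : ∀ i : Fin (kv+1), 1 ≤ p i ∧ p i ≤ cap i.val)
    (hpP : P' p) (hplast : ∀ h : 0 < kv + 1, kv + 1 ≤ p ⟨kv + 1 - 1, by omega⟩)
    (s : Fin (m - (kv + 1)) → ℕ) (hsb : ∀ t : Fin (m - (kv+1)), 1 ≤ s t ∧ s t ≤ t.val + 1)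
    (hsP : P' s) :
    (∀ i : Fin m, 1 ≤ glue kv hk p s i ∧ glue kv hk p s i ≤ cap i.val) ∧ P' (glue kv hk p s) := by
  constructor
  · rintro ⟨jv, hjv⟩
    by_cases h : jv ≤ kv
    · simp only [glue, dif_pos h]
      exact hpb ⟨jv, by omega⟩
    · simp only [glue, dif_neg h]
      have h1 : 1 ≤ s ⟨jv - (kv+1), by omega⟩ := (hsb _).1
      have h2 : s ⟨jv - (kv+1), by omega⟩ ≤ (jv - (kv+1)) + 1 := (hsb _).2
      have h3 := hdom jv hjv
      exact ⟨h1, by omega⟩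
  · rintro ⟨iv, hiv⟩ ⟨jv, hjv⟩ hij
    have hij' : iv < jv := hij
    by_cases hj : jv ≤ kv
    · have hi : iv ≤ kv := by omega
      simp only [glue, dif_pos hj, dif_pos hi]
      exact hpP ⟨iv, by omega⟩ ⟨jv, by omega⟩ (Fin.mk_lt_mk.2 hij')
    · by_cases hi : iv ≤ kv
      · left
        simp only [glue, dif_neg hj, dif_pos hi]
        have h2 : s ⟨jv - (kv+1), by omega⟩ ≤ (jv - (kv+1)) + 1 := (hsb _).2
        omega
      · simp only [glue, dif_neg hj, dif_neg hi]
        rcases hsP ⟨iv - (kv+1), by omega⟩ ⟨jv - (kv+1), by omega⟩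
          (Fin.mk_lt_mk.2 (by omega)) with h | h
        · left
          have h' : s ⟨jv - (kv+1), by omega⟩ + (iv - (kv+1)) ≤ jv - (kv+1) := h
          omega
        · right
          have h' : s ⟨iv - (kv+1), by omega⟩ + (jv - (kv+1))
              ≤ s ⟨jv - (kv+1), by omega⟩ + (iv - (kv+1)) := h
          omega

lemma glue_statJ {m : ℕ} (kv : ℕ) (hk : kv < m)
    (p : Fin (kv + 1) → ℕ) (hplast : ∀ h : 0 < kv + 1, kv + 1 ≤ p ⟨kv + 1 - 1, by omega⟩)
    (s : Fin (m - (kv + 1)) → ℕ) (hsb : ∀ t : Fin (m - (kv+1)), 1 ≤ s t ∧ s t ≤ t.val + 1) :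
    statJ (glue kv hk p s) = kv := by
  have hple : kv + 1 ≤ p ⟨kv, by omega⟩ := by
    have := hplast (by omega)
    simpa using this
  rw [statJ, Nat.findGreatest_eq_iff]
  refine ⟨by omega, fun _ => ?_, fun t ht1 ht2 => ?_⟩
  · -- kv + 1 ≤ fv (glue ...) kv
    have hle : kv ≤ kv := le_refl kv
    simp only [fv, dif_pos hk, glue, dif_pos hle]
    exact hple
  · -- t > kv: glue value is low
    intro hP
    have htm : t < m := by omega
    have hnle : ¬ (t ≤ kv) := by omega
    rw [fv, dif_pos htm] at hP
    rw [glue] at hP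
    simp only [dif_neg hnle] at hP
    have h2 : s ⟨t - (kv+1), by omega⟩ ≤ (t - (kv+1)) + 1 := (hsb _).2
    omega



lemma app_congr {L : ℕ} (s : Fin L → ℕ) {a b : ℕ} (ha : a < L) (hb : b < L) (h : a = b) :
    s ⟨a, ha⟩ = s ⟨b, hb⟩ := by subst h; rfl

lemma decomp_ext {m : ℕ} {cap : ℕ → ℕ}
    (x y : Σ k : Fin m, PrefF (k.val + 1) cap × Fam (m - (k.val + 1)) (fun s => s + 1))
    (h1 : x.1.val = y.1.val)
    (h2 : ∀ i (hi : i < x.1.val + 1) (hi' : i < y.1.val + 1), x.2.1.1 ⟨i, hi⟩ = y.2.1.1 ⟨i, hi'⟩)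
    (h3 : ∀ t (ht : t < m - (x.1.val + 1)) (ht' : t < m - (y.1.val + 1)),
      x.2.2.1 ⟨t, ht⟩ = y.2.2.1 ⟨t, ht'⟩) :
    x = y := by
  obtain ⟨⟨kv, hk⟩, p, s⟩ := x
  obtain ⟨⟨kv', hk'⟩, p', s'⟩ := y
  simp only at h1 h2 h3
  subst h1
  have hp : p = p' := Subtype.ext (funext fun i => by
    obtain ⟨iv, hiv⟩ := i; exact h2 iv hiv hiv)
  have hs : s = s' := Subtype.ext (funext fun t => by
    obtain ⟨tv, htv⟩ := t; exact h3 tv htv htv)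
  subst hp; subst hs; rfl

def decompEquiv (m : ℕ) (cap : ℕ → ℕ) (hm : 0 < m) (hdom : ∀ i, i < m → i + 1 ≤ cap i) :
    Fam m cap ≃ Σ k : Fin m, PrefF (k.val + 1) cap × Fam (m - (k.val + 1)) (fun s => s + 1) where
  toFun F := ⟨⟨statJ F.1, statJ_lt hm F.1⟩,
    ⟨⟨decompPre hm F, (decompPre_prop hm F).1, (decompPre_prop hm F).2.1,
        (decompPre_prop hm F).2.2⟩,
     ⟨decompSuf F, (decompSuf_prop hm F).1, (decompSuf_prop hm F).2⟩⟩⟩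
  invFun x := ⟨glue x.1.val x.1.isLt x.2.1.1 x.2.2.1,
    glue_prop hdom x.1.val x.1.isLt x.2.1.1 x.2.1.2.1 x.2.1.2.2.1 x.2.1.2.2.2
      x.2.2.1 x.2.2.2.1 x.2.2.2.2⟩
  left_inv := by
    intro F
    apply Subtype.ext
    funext j
    obtain ⟨jv, hjv⟩ := j
    show glue (statJ F.1) (statJ_lt hm F.1) (decompPre hm F) (decompSuf F) ⟨jv, hjv⟩
        = F.1 ⟨jv, hjv⟩
    by_cases h : jv ≤ statJ F.1
    · simp only [glue, dif_pos h, decompPre]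
    · simp only [glue, dif_neg h, decompSuf]
      apply app_congr
      omega
  right_inv := by
    intro x
    apply decomp_ext
    · exact glue_statJ x.1.val x.1.isLt x.2.1.1 x.2.1.2.2.2 x.2.2.1 x.2.2.2.1
    · intro i hi hi'
      show glue x.1.val x.1.isLt x.2.1.1 x.2.2.1 ⟨i, _⟩ = x.2.1.1 ⟨i, hi'⟩
      have hile : i ≤ x.1.val := by omega
      simp only [glue, dif_pos hile]
    · intro t ht ht'
      have hJ : statJ (glue x.1.val x.1.isLt x.2.1.1 x.2.2.1) = x.1.val :=
        glue_statJ x.1.val x.1.isLt x.2.1.1 x.2.1.2.2.2 x.2.2.1 x.2.2.2.1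
      show glue x.1.val x.1.isLt x.2.1.1 x.2.2.1
          ⟨statJ (glue x.1.val x.1.isLt x.2.1.1 x.2.2.1) + 1 + t, _⟩ = x.2.2.1 ⟨t, ht'⟩
      have hnle : ¬ (statJ (glue x.1.val x.1.isLt x.2.1.1 x.2.2.1) + 1 + t ≤ x.1.val) := by
        rw [hJ]; omega
      simp only [glue, dif_neg hnle]
      apply app_congr
      omega



lemma gc_zero (c : ℕ) : gc 0 c = 1 := by
  have h : (c : ℚ) + 1 ≠ 0 := by positivity
  simp [gc, Nat.choose_zero_right]
  field_simp
  exact h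

lemma cat_eq_catalan (m : ℕ) : cat m = (catalan m : ℚ) := by
  have h := succ_mul_catalan_eq_centralBinom m
  simp only [Nat.centralBinom] at h
  have h' : ((m:ℚ) + 1) * (catalan m : ℚ) = ((2 * m).choose m : ℚ) := by
    exact_mod_cast congrArg (fun x : ℕ => (x : ℚ)) h
  have hm : (m : ℚ) + 1 ≠ 0 := by positivity
  rw [cat]
  field_simp
  linarith [h']

lemma gc_zero_right (m : ℕ) : gc m 0 = cat m := by
  have key : ((m : ℚ) + 1) * ((2 * m + 1).choose m : ℚ) = (2 * (m : ℚ) + 1) * ((2 * m).choose m : ℚ) := by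
    have h1 : (2 * m + 1) * (2 * m).choose m = (2 * m + 1).choose (m + 1) * (m + 1) :=
      Nat.add_one_mul_choose_eq (2 * m) m
    have h2 : (2 * m + 1).choose (m + 1) = (2 * m + 1).choose m := by
      rw [← Nat.choose_symm (by omega : m + 1 ≤ 2 * m + 1)]
      congr 1
      omega
    rw [h2] at h1
    have := congrArg (fun x : ℕ => (x : ℚ)) h1
    push_cast at this
    linarith
  have hm : (m : ℚ) + 1 ≠ 0 := by positivity
  have h2m : 2 * (m : ℚ) + 1 ≠ 0 := by positivity
  rw [gc, cat]
  push_cast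
  field_simp
  linear_combination key

lemma gc_boundary (m : ℕ) : gc (m + 1) 0 = gc m 1 := by
  have hA : ((2 * m + 2).choose (m + 1) : ℚ) * ((m:ℚ) + 1) = ((2 * m + 2).choose m : ℚ) * ((m:ℚ) + 2) := by
    have h := Nat.choose_succ_right_eq (2 * m + 2) m
    have h2 : 2 * m + 2 - m = m + 2 := by omega
    rw [h2] at h
    exact_mod_cast congrArg (fun x : ℕ => (x : ℚ)) h
  have hP : ((2 * (m+1) + 0 + 1).choose (m+1) : ℚ)
      = ((2 * m + 2).choose m : ℚ) + ((2 * m + 2).choose (m + 1) : ℚ) := by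
    have e : 2 * (m + 1) + 0 + 1 = (2 * m + 2) + 1 := by omega
    rw [e, Nat.choose_succ_succ' (2 * m + 2) m]
    push_cast
    ring
  have e2 : 2 * m + 1 + 1 = 2 * m + 2 := by omega
  rw [gc, gc, hP]
  rw [e2]
  push_cast
  have d1 : 2 * ((m:ℚ)+1) + 0 + 1 ≠ 0 := by positivity
  have d2 : 2 * (m:ℚ) + 1 + 1 ≠ 0 := by positivity
  field_simp
  ring_nf
  ring_nf at hA
  linear_combination 2 * hA

lemma gc_pascal (m c : ℕ) : gc (m + 1) (c + 1) = gc (m + 1) c + gc m (c + 2) := by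
  set A : ℚ := ((2 * m + c + 3).choose (m + 1) : ℚ) with hAdef
  set B : ℚ := ((2 * m + c + 3).choose m : ℚ) with hBdef
  have hAB : A * ((m:ℚ) + 1) = B * ((m:ℚ) + (c:ℚ) + 3) := by
    have h := Nat.choose_succ_right_eq (2 * m + c + 3) m
    have h2 : 2 * m + c + 3 - m = m + c + 3 := by omega
    rw [h2] at h
    rw [hAdef, hBdef]
    exact_mod_cast congrArg (fun x : ℕ => (x : ℚ)) h
  have hP : ((2 * (m+1) + (c+1) + 1).choose (m+1) : ℚ) = B + A := by
    have e : 2 * (m + 1) + (c + 1) + 1 = (2 * m + c + 3) + 1 := by omega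
    rw [e, Nat.choose_succ_succ' (2 * m + c + 3) m, hAdef, hBdef]
    push_cast
    ring
  have e1 : 2 * (m + 1) + c + 1 = 2 * m + c + 3 := by omega
  have e2 : 2 * m + (c + 2) + 1 = 2 * m + c + 3 := by omega
  rw [gc, gc, gc, hP, e1, e2, ← hAdef, ← hBdef]
  push_cast
  have d1 : 2 * ((m:ℚ)+1) + ((c:ℚ)+1) + 1 ≠ 0 := by positivity
  have d2 : 2 * ((m:ℚ)+1) + (c:ℚ) + 1 ≠ 0 := by positivity
  have d3 : 2 * (m:ℚ) + ((c:ℚ)+2) + 1 ≠ 0 := by positivity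
  field_simp
  ring_nf
  ring_nf at hAB
  linear_combination 2 * (2*(m:ℚ) + (c:ℚ) + 3) * hAB

lemma gc_segner (m : ℕ) :
    ∑ t ∈ Finset.range (m + 1), gc t 0 * gc (m - t) 0 = gc (m + 1) 0 := by
  have h := catalan_succ' m
  have h' : (catalan (m+1) : ℚ) = ∑ t ∈ Finset.range (m + 1), (catalan t : ℚ) * (catalan (m - t) : ℚ) := by
    rw [h]
    rw [Finset.Nat.sum_antidiagonal_eq_sum_range_succ_mk]
    push_cast
    rfl
  calc ∑ t ∈ Finset.range (m + 1), gc t 0 * gc (m - t) 0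
      = ∑ t ∈ Finset.range (m + 1), (catalan t : ℚ) * (catalan (m - t) : ℚ) := by
        apply Finset.sum_congr rfl
        intro t _
        rw [gc_zero_right, gc_zero_right, cat_eq_catalan, cat_eq_catalan]
    _ = (catalan (m+1) : ℚ) := h'.symm
    _ = gc (m + 1) 0 := by rw [gc_zero_right, cat_eq_catalan]

lemma gc_conv : ∀ m c : ℕ, ∑ t ∈ Finset.range (m + 1), gc t c * gc (m - t) 0 = gc m (c + 1) := by
  intro m
  induction m using Nat.strong_induction_on with
  | _ m ih =>
    intro c
    induction c with
    | zero =>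
      rw [gc_segner m, gc_boundary m]
    | succ c hc =>
      cases m with
      | zero =>
        simp [gc_zero]
      | succ m' =>
        have hstep : ∀ t' ∈ Finset.range (m' + 1),
            gc (t' + 1) (c + 1) * gc (m' + 1 - (t' + 1)) 0
              = gc (t' + 1) c * gc (m' + 1 - (t' + 1)) 0 + gc t' (c + 2) * gc (m' - t') 0 := by
          intro t' ht'
          have e : m' + 1 - (t' + 1) = m' - t' := by omega
          rw [gc_pascal t' c, e]
          ring
        rw [Finset.sum_range_succ', Finset.sum_congr rfl hstep, Finset.sum_add_distrib]
        have h2 : ∑ t' ∈ Finset.range (m' + 1), gc t' (c + 2) * gc (m' - t') 0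
            = gc m' (c + 2 + 1) := ih m' (by omega) (c + 2)
        have hc' := hc
        rw [Finset.sum_range_succ'] at hc'
        have hg0 : gc 0 (c + 1) = gc 0 c := by rw [gc_zero, gc_zero]
        have hpas := gc_pascal m' (c + 1)
        have e : c + 1 + 2 = c + 2 + 1 := by omega
        rw [e] at hpas
        rw [h2, hg0]
        linarith [hc', hpas]

lemma gc_tel (j M : ℕ) : ∑ c' ∈ Finset.range (M + 1), gc j (c' + 1) = gc (j + 1) M := by
  induction M with
  | zero => simp [(gc_boundary j).symm]
  | succ M ihM =>
    rw [Finset.sum_range_succ, ihM, ← gc_pascal j M]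

/-- main identity: the combinatorial recurrence is satisfied by gc. -/
lemma id_main (m c : ℕ) (hm : 0 < m) :
    ∑ k ∈ Finset.range m, (∑ c' ∈ Finset.range (c + 1), gc k c') * gc (m - 1 - k) 0
      = gc m c := by
  obtain ⟨m', rfl⟩ : ∃ m'', m = m'' + 1 := ⟨m - 1, by omega⟩
  have hbase : ∑ k ∈ Finset.range (m' + 1), gc k 0 * gc (m' + 1 - 1 - k) 0
      = gc (m' + 1) 0 := by
    have h := gc_conv m' 0
    rw [gc_boundary m']
    rw [← h]
    apply Finset.sum_congr rfl
    intro k hk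
    congr 2 <;> omega
  cases c with
  | zero =>
    have : ∀ k ∈ Finset.range (m' + 1),
        (∑ c' ∈ Finset.range (0 + 1), gc k c') * gc (m' + 1 - 1 - k) 0
          = gc k 0 * gc (m' + 1 - 1 - k) 0 := by
      intro k hk
      rw [Finset.sum_range_one]
    rw [Finset.sum_congr rfl this, hbase]
  | succ c₀ =>
    have hsplit : ∀ k ∈ Finset.range (m' + 1),
        (∑ c' ∈ Finset.range (c₀ + 1 + 1), gc k c') * gc (m' + 1 - 1 - k) 0
          = gc k 0 * gc (m' + 1 - 1 - k) 0 + gc (k + 1) c₀ * gc (m' + 1 - 1 - k) 0 := by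
      intro k hk
      rw [Finset.sum_range_succ' (fun c' => gc k c') (c₀ + 1)]
      rw [gc_tel k c₀]
      ring
    rw [Finset.sum_congr rfl hsplit, Finset.sum_add_distrib, hbase]
    have h2 : ∑ k ∈ Finset.range (m' + 1), gc (k + 1) c₀ * gc (m' + 1 - 1 - k) 0
        = gc (m' + 1) (c₀ + 1) - gc (m' + 1) 0 := by
      have hconv := gc_conv (m' + 1) c₀
      rw [Finset.sum_range_succ'] at hconv
      have e : ∀ k ∈ Finset.range (m' + 1),
          gc (k + 1) c₀ * gc (m' + 1 - (k + 1)) 0 = gc (k + 1) c₀ * gc (m' + 1 - 1 - k) 0 := by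
        intro k hk
        congr 2 <;> omega
      rw [Finset.sum_congr rfl e, gc_zero] at hconv
      have e2 : m' + 1 - 0 = m' + 1 := by omega
      rw [e2] at hconv
      linarith [hconv]
    rw [h2]
    ring

/-- top-level identity -/
lemma id_top (N : ℕ) :
    ∑ k ∈ Finset.range (N + 1), (∑ c' ∈ Finset.range (N + 1 - k), gc k c') * gc (N - k) 0
      = ∑ k ∈ Finset.range (N + 1), gc k (N - k) * gc (N + 1 - k) 0 := by
  -- split each inner sum into the c'=0 term and the rest
  have hsplit : ∀ k ∈ Finset.range (N + 1),
      (∑ c' ∈ Finset.range (N + 1 - k), gc k c') * gc (N - k) 0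
        = gc k 0 * gc (N - k) 0
          + (∑ c' ∈ Finset.range (N - k), gc k (c' + 1)) * gc (N - k) 0 := by
    intro k hk
    have hk' : k < N + 1 := Finset.mem_range.1 hk
    have e : N + 1 - k = (N - k) + 1 := by omega
    rw [e, Finset.sum_range_succ' (fun c' => gc k c')]
    ring
  rw [Finset.sum_congr rfl hsplit, Finset.sum_add_distrib]
  have hbase : ∑ k ∈ Finset.range (N + 1), gc k 0 * gc (N - k) 0 = gc (N + 1) 0 := by
    rw [gc_conv N 0, gc_boundary N]
  rw [hbase]
  -- second piece
  have hsecond : ∑ k ∈ Finset.range (N + 1),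
      (∑ c' ∈ Finset.range (N - k), gc k (c' + 1)) * gc (N - k) 0
        = ∑ k ∈ Finset.range N, gc (k + 1) (N - 1 - k) * gc (N - k) 0 := by
    rw [Finset.sum_range_succ]
    have elast : (∑ c' ∈ Finset.range (N - N), gc N (c' + 1)) * gc (N - N) 0 = 0 := by
      simp
    rw [elast, add_zero]
    apply Finset.sum_congr rfl
    intro k hk
    have hk' : k < N := Finset.mem_range.1 hk
    have e : N - k = (N - 1 - k) + 1 := by omega
    rw [e, gc_tel k (N - 1 - k), ← e]
  rw [hsecond]
  -- now rewrite RHS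
  rw [Finset.sum_range_succ' (fun k => gc k (N - k) * gc (N + 1 - k) 0) N]
  have e0 : gc 0 (N - 0) * gc (N + 1 - 0) 0 = gc (N + 1) 0 := by
    rw [gc_zero]
    have : N + 1 - 0 = N + 1 := by omega
    rw [this, one_mul]
  rw [e0]
  have emain : ∀ k ∈ Finset.range N,
      gc (k + 1) (N - (k + 1)) * gc (N + 1 - (k + 1)) 0
        = gc (k + 1) (N - 1 - k) * gc (N - k) 0 := by
    intro k hk
    have hk' : k < N := Finset.mem_range.1 hk
    congr 2 <;> omega
  rw [Finset.sum_congr rfl emain]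
  ring

-- ============ counting layer ============

lemma card_decomp (m : ℕ) (cap : ℕ → ℕ) (hm : 0 < m) (hdom : ∀ i, i < m → i + 1 ≤ cap i) :
    Nat.card (Fam m cap) = ∑ k ∈ Finset.range m,
      Nat.card (PrefF (k + 1) cap) * Nat.card (Fam (m - (k + 1)) (fun s => s + 1)) := by
  calc Nat.card (Fam m cap)
      = Nat.card (Σ k : Fin m, PrefF (k.val + 1) cap × Fam (m - (k.val + 1)) (fun s => s + 1)) :=
        Nat.card_congr (decompEquiv m cap hm hdom)
    _ = ∑ k : Fin m, Nat.card (PrefF (k.val + 1) cap × Fam (m - (k.val + 1)) (fun s => s + 1)) :=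
        nat_card_sigma _
    _ = ∑ k : Fin m, Nat.card (PrefF (k.val + 1) cap) * Nat.card (Fam (m - (k.val + 1)) (fun s => s + 1)) := by
        apply Finset.sum_congr rfl
        intro k _
        exact Nat.card_prod _ _
    _ = ∑ k ∈ Finset.range m,
          Nat.card (PrefF (k + 1) cap) * Nat.card (Fam (m - (k + 1)) (fun s => s + 1)) :=
        Fin.sum_univ_eq_sum_range
          (fun k => Nat.card (PrefF (k + 1) cap) * Nat.card (Fam (m - (k + 1)) (fun s => s + 1))) m

lemma card_peel (k : ℕ) (cap : ℕ → ℕ) (hslope : ∀ i : ℕ, i < k → cap k + i ≤ cap i + k) :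
    Nat.card (PrefF (k + 1) cap) = ∑ c' ∈ Finset.range (cap k - k), W k c' := by
  calc Nat.card (PrefF (k + 1) cap)
      = Nat.card (Σ c : Fin (cap k - k), Fam k (fun i => c.val + i + 1)) :=
        Nat.card_congr (peelEquiv k cap hslope)
    _ = ∑ c : Fin (cap k - k), Nat.card (Fam k (fun i => c.val + i + 1)) := nat_card_sigma _
    _ = ∑ c' ∈ Finset.range (cap k - k), W k c' :=
        Fin.sum_univ_eq_sum_range (fun c' => W k c') (cap k - k)

lemma fam_cap_congr (L : ℕ) (cap1 cap2 : ℕ → ℕ) (h : ∀ i, cap1 i = cap2 i) :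
    Nat.card (Fam L cap1) = Nat.card (Fam L cap2) := by
  have : cap1 = cap2 := funext h
  rw [this]

lemma W_rec (m c : ℕ) (hm : 0 < m) :
    W m c = ∑ k ∈ Finset.range m, (∑ c' ∈ Finset.range (c + 1), W k c') * W (m - 1 - k) 0 := by
  rw [W, card_decomp m (fun i => c + i + 1) hm (by intro i _; show i + 1 ≤ c + i + 1; omega)]
  apply Finset.sum_congr rfl
  intro k hk
  have hk' : k < m := Finset.mem_range.1 hk
  congr 1
  · rw [card_peel k (fun i => c + i + 1)
        (by intro i _; show c + k + 1 + i ≤ c + i + 1 + k; omega)]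
    have e : (fun i => c + i + 1) k - k = c + 1 := by show c + k + 1 - k = c + 1; omega
    rw [e]
  · rw [W]
    have e1 : m - (k + 1) = m - 1 - k := by omega
    rw [e1]
    exact fam_cap_congr _ _ _ (fun i => by show i + 1 = 0 + i + 1; omega)

lemma A_rec (n : ℕ) (hn : 0 < n) :
    Nat.card (Fam n (fun _ => n)) = ∑ k ∈ Finset.range n,
      (∑ c' ∈ Finset.range (n - k), W k c') * W (n - 1 - k) 0 := by
  rw [card_decomp n (fun _ => n) hn (by intro i hi; show i + 1 ≤ n; omega)]
  apply Finset.sum_congr rfl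
  intro k hk
  have hk' : k < n := Finset.mem_range.1 hk
  congr 1
  · rw [card_peel k (fun _ => n) (by intro i _; show n + i ≤ n + k; omega)]
  · rw [W]
    have e1 : n - (k + 1) = n - 1 - k := by omega
    rw [e1]
    exact fam_cap_congr _ _ _ (fun i => by show i + 1 = 0 + i + 1; omega)

lemma W_eq_gc : ∀ m c : ℕ, (W m c : ℚ) = gc m c := by
  intro m
  induction m using Nat.strong_induction_on with
  | _ m ih =>
    intro c
    cases Nat.eq_zero_or_pos m with
    | inl h0 =>
      subst h0
      rw [W_zero, gc_zero]
      norm_num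
    | inr hm =>
      rw [W_rec m c hm]
      push_cast
      have : ∀ k ∈ Finset.range m,
          ((∑ c' ∈ Finset.range (c + 1), (W k c' : ℚ)) * (W (m - 1 - k) 0 : ℚ))
            = (∑ c' ∈ Finset.range (c + 1), gc k c') * gc (m - 1 - k) 0 := by
        intro k hk
        have hk' : k < m := Finset.mem_range.1 hk
        congr 1
        · apply Finset.sum_congr rfl
          intro c' _
          exact ih k (by omega) c'
        · exact ih (m - 1 - k) (by omega) 0
      rw [Finset.sum_congr rfl this]
      exact id_main m c hm

lemma cond_iff_P' {n : ℕ} (f : Fin n → ℕ) : Cond f ↔ P' f := by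
  constructor
  · intro h i j hij
    have hv : (i : ℕ) < (j : ℕ) := hij
    have := h i j hij
    omega
  · intro h i j hij
    have hv : (i : ℕ) < (j : ℕ) := hij
    have := h i j hij
    omega

end Aux

theorem stmt11 (n : ℕ) (hn : 1 ≤ n) :
    ({f : Fin n → ℕ | (∀ i, 1 ≤ f i ∧ f i ≤ n) ∧ Cond f}.ncard : ℚ)
      = ∑ k ∈ Finset.range n, gc k (n - 1 - k) * cat (n - k) := by
  obtain ⟨N, rfl⟩ : ∃ N, n = N + 1 := ⟨n - 1, by omega⟩
  have hset : ({f : Fin (N+1) → ℕ | (∀ i, 1 ≤ f i ∧ f i ≤ N + 1) ∧ Cond f}.ncard : ℕ)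
      = Nat.card (Aux.Fam (N+1) (fun _ => N + 1)) := by
    rw [← Nat.card_coe_set_eq]
    apply Nat.card_congr
    apply Equiv.subtypeEquivRight
    intro f
    simp only [Set.mem_setOf_eq]
    constructor
    · rintro ⟨hb, hc⟩
      exact ⟨hb, (Aux.cond_iff_P' f).1 hc⟩
    · rintro ⟨hb, hc⟩
      exact ⟨hb, (Aux.cond_iff_P' f).2 hc⟩
  rw [hset]
  have hA := Aux.A_rec (N+1) (Nat.succ_pos N)
  rw [hA]
  push_cast
  have hcast : ∀ k ∈ Finset.range (N+1),
      ((∑ c' ∈ Finset.range (N + 1 - k), (Aux.W k c' : ℚ)) * (Aux.W (N - k) 0 : ℚ))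
        = (∑ c' ∈ Finset.range (N + 1 - k), gc k c') * gc (N - k) 0 := by
    intro k hk
    congr 1
    · apply Finset.sum_congr rfl
      intro c' _
      exact Aux.W_eq_gc k c'
    · exact Aux.W_eq_gc (N - k) 0
  rw [Finset.sum_congr rfl hcast, Aux.id_top N]
  apply Finset.sum_congr rfl
  intro k hk
  rw [Aux.gc_zero_right (N + 1 - k)]
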